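/- Let A be a finite alphabet with q ≥ 2 symbols, let d ≥ 2, and let f : A^d → A be a bipermutive local rule. Let F : A^{2(d−1)} → A^{d−1} be the no-boundary cellular automaton of length 2(d−1) defined by f. Then the square array indexed by pairs (x, y) ∈ A^{d−1} × A^{d−1} with entry F(x‖y) (where x‖y denotes concatenation) is a Latin square of order q^{d−1}; that is, for every fixed x ∈ A^{d−1} the map y ↦ F(x‖y) is a bijection of A^{d−1}, and for every fixed y ∈ A^{d−1} the map x ↦ F(x‖y) is a bijection of A^{d−1}. -/
import Mathlib


/-- The square generated by a bipermutive CA of diameter `d` and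
length `2(d-1)` is a Latin square of order `q^(d-1)`. -/
theorem stmt_1 (A : Type*) [Fintype A] (q d : ℕ) (hq : Fintype.card A = q)
    (hq2 : 2 ≤ q) (hd : 2 ≤ d)
    (f : (Fin d → A) → A)
    -- `f` is left permutive: fixing the last `d-1` coordinates gives a bijection in the first
    (hleft : ∀ z : Fin (d - 1) → A, Function.Bijective (fun a : A =>
      f (fun i : Fin d => if h : (i : ℕ) = 0 then a
        else z ⟨(i : ℕ) - 1, by have := i.isLt; omega⟩)))
    -- `f` is right permutive: fixing the first `d-1` coordinates gives a bijection in the last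
    (hright : ∀ z : Fin (d - 1) → A, Function.Bijective (fun a : A =>
      f (fun i : Fin d => if h : (i : ℕ) < d - 1 then z ⟨(i : ℕ), h⟩ else a)))
    -- `F` is the no-boundary CA of length `2(d-1)` and diameter `d` with local rule `f`
    (F : (Fin (2 * (d - 1)) → A) → (Fin (d - 1) → A))
    (hF : ∀ x : Fin (2 * (d - 1)) → A, ∀ i : Fin (d - 1),
      F x i = f (fun j : Fin d =>
        x ⟨(i : ℕ) + (j : ℕ), by have := i.isLt; have := j.isLt; omega⟩))
    -- `cat x y` is the concatenation `x‖y`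
    (cat : (Fin (d - 1) → A) → (Fin (d - 1) → A) → (Fin (2 * (d - 1)) → A))
    (hcat : ∀ x y : Fin (d - 1) → A, ∀ j : Fin (2 * (d - 1)),
      cat x y j = if h : (j : ℕ) < d - 1 then x ⟨(j : ℕ), h⟩
        else y ⟨(j : ℕ) - (d - 1), by have := j.isLt; omega⟩) :
    -- the square has order `q^(d-1)`, every row is a permutation, every column is a permutation
    Fintype.card (Fin (d - 1) → A) = q ^ (d - 1) ∧
    (∀ x : Fin (d - 1) → A, Function.Bijective (fun y : Fin (d - 1) → A => F (cat x y))) ∧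
    (∀ y : Fin (d - 1) → A, Function.Bijective (fun x : Fin (d - 1) → A => F (cat x y))) := by
  -- row window decomposition: F (cat x y) k = (right-permutive map at z) (y k)
  have hrowF : ∀ (x y : Fin (d - 1) → A) (k : Fin (d - 1)),
      F (cat x y) k = f (fun j : Fin d => if h : (j : ℕ) < d - 1 then
        cat x y ⟨(k : ℕ) + (j : ℕ), by have := k.isLt; omega⟩ else y k) := by
    intro x y k
    rw [hF]
    congr 1
    funext j
    by_cases h : (j : ℕ) < d - 1
    · simp [h]
    · have hj : (j : ℕ) = d - 1 := by have := j.isLt; omega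
      simp only [h, dif_neg, not_false_iff]
      rw [hcat]
      have h2 : ¬ ((k : ℕ) + (j : ℕ) < d - 1) := by omega
      simp only [h2, dif_neg, not_false_iff]
      congr 1
      ext
      simp [hj]
  have hcolF : ∀ (x y : Fin (d - 1) → A) (k : Fin (d - 1)),
      F (cat x y) k = f (fun j : Fin d => if h : (j : ℕ) = 0 then x k else
        cat x y ⟨(k : ℕ) + ((j : ℕ) - 1) + 1,
          by have := k.isLt; have := j.isLt; omega⟩) := by
    intro x y k
    rw [hF]
    congr 1
    funext j
    by_cases h : (j : ℕ) = 0
    · simp only [h, dif_pos]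
      rw [hcat]
      have h2 : (k : ℕ) + 0 < d - 1 := by have := k.isLt; omega
      simp only [h2, dif_pos]
      have h3 : (⟨(k : ℕ) + 0, h2⟩ : Fin (d - 1)) = k := by
        ext; simp
      rw [h3]
    · simp only [h, dif_neg, not_false_iff]
      congr 1
      ext
      simp
      omega
  have hrow_inj : ∀ x, Function.Injective (fun y : Fin (d - 1) → A => F (cat x y)) := by
    intro x y y' hEq
    simp only at hEq
    suffices H : ∀ n : ℕ, ∀ k : Fin (d - 1), (k : ℕ) < n → y k = y' k by
      funext k; exact H (d - 1) k k.isLt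
    intro n
    induction n with
    | zero => intro k hk; omega
    | succ n ih =>
      intro k hk
      set z : Fin (d - 1) → A := fun t =>
        cat x y ⟨(k : ℕ) + (t : ℕ), by have := k.isLt; have := t.isLt; omega⟩ with hzdef
      have hz' : ∀ t : Fin (d - 1),
          z t = cat x y' ⟨(k : ℕ) + (t : ℕ), by have := k.isLt; have := t.isLt; omega⟩ := by
        intro t
        rw [hzdef]
        simp only
        rw [hcat, hcat]
        by_cases h : (k : ℕ) + (t : ℕ) < d - 1
        · simp [h]
        · simp only [h, dif_neg, not_false_iff]
          apply ih
          show (k : ℕ) + (t : ℕ) - (d - 1) < n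
          have := t.isLt; omega
      have e1 : F (cat x y) k = (fun a : A => f (fun i : Fin d =>
          if h : (i : ℕ) < d - 1 then z ⟨(i : ℕ), h⟩ else a)) (y k) := by
        rw [hrowF]
      have e2 : F (cat x y') k = (fun a : A => f (fun i : Fin d =>
          if h : (i : ℕ) < d - 1 then z ⟨(i : ℕ), h⟩ else a)) (y' k) := by
        rw [hrowF]
        congr 1
        funext j
        by_cases h : (j : ℕ) < d - 1
        · simp only [h, dif_pos]
          exact (hz' ⟨(j : ℕ), h⟩).symm
        · simp [h]
      exact (hright z).1 (e1.symm.trans ((congrFun hEq k).trans e2))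
  have hcol_inj : ∀ y, Function.Injective (fun x : Fin (d - 1) → A => F (cat x y)) := by
    intro y x x' hEq
    simp only at hEq
    suffices H : ∀ n : ℕ, ∀ k : Fin (d - 1), d - 1 - (k : ℕ) ≤ n → x k = x' k by
      funext k; exact H (d - 1) k (by omega)
    intro n
    induction n with
    | zero => intro k hk; have := k.isLt; omega
    | succ n ih =>
      intro k hk
      set z : Fin (d - 1) → A := fun t =>
        cat x y ⟨(k : ℕ) + (t : ℕ) + 1, by have := k.isLt; have := t.isLt; omega⟩ with hzdef
      have hz' : ∀ t : Fin (d - 1),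
          z t = cat x' y ⟨(k : ℕ) + (t : ℕ) + 1,
            by have := k.isLt; have := t.isLt; omega⟩ := by
        intro t
        rw [hzdef]
        simp only
        rw [hcat, hcat]
        by_cases h : (k : ℕ) + (t : ℕ) + 1 < d - 1
        · simp only [h, dif_pos]
          apply ih
          show d - 1 - ((k : ℕ) + (t : ℕ) + 1) ≤ n
          omega
        · simp [h]
      have e1 : F (cat x y) k = (fun a : A => f (fun i : Fin d =>
          if h : (i : ℕ) = 0 then a
          else z ⟨(i : ℕ) - 1, by have := i.isLt; omega⟩)) (x k) := by
        rw [hcolF]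
      have e2 : F (cat x' y) k = (fun a : A => f (fun i : Fin d =>
          if h : (i : ℕ) = 0 then a
          else z ⟨(i : ℕ) - 1, by have := i.isLt; omega⟩)) (x' k) := by
        rw [hcolF]
        congr 1
        funext j
        by_cases h : (j : ℕ) = 0
        · simp [h]
        · simp only [h, dif_neg, not_false_iff]
          exact (hz' ⟨(j : ℕ) - 1, by have := j.isLt; omega⟩).symm
      exact (hleft z).1 (e1.symm.trans ((congrFun hEq k).trans e2))
  refine ⟨by simp [Fintype.card_fun, hq], fun x => ?_, fun y => ?_⟩
  · exact Finite.injective_iff_bijective.mp (hrow_inj x)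
  · exact Finite.injective_iff_bijective.mp (hcol_inj y)
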